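/- Let τ>0 and η∈(0,1]. Let f : [0,∞) → [0,∞) be a C² function with f(0)=0, f(1)=1, f'(0)>1, f'(1)<1, f'(u)>0 for all u∈(0,1), and f(u)>u for all u∈(0,1), let f_η be a bistable approximation of f, and let (U,c) be a nonincreasing C² travelling wave: U''(z) + c·U'(z) + f_η(U(z + cτ)) − U(z) = 0 for all z∈ℝ, U(−∞)=1, U(+∞)=−η. Then there exist constants μ>0 and M>0 such that |1 − U(z)| + |−η − U(−z)| ≤ M·e^{μz} for all z ≤ 0, and |U'(z)| + |U''(z)| ≤ M·e^{−μ|z|} for all z∈ℝ. -/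

import Mathlib

open Set Filter
open scoped Topology

section Helpers

lemma mono_deriv_nonneg' {g : ℝ → ℝ} (hg : Monotone g) (x : ℝ) : 0 ≤ deriv g x := by
  by_cases hd : DifferentiableAt ℝ g x
  · have h := hd.hasDerivAt
    rw [hasDerivAt_iff_tendsto_slope] at h
    have h' : Tendsto (slope g x) (𝓝[>] x) (𝓝 (deriv g x)) :=
      h.mono_left (nhdsWithin_mono _ (fun y hy => ne_of_gt hy))
    refine ge_of_tendsto h' ?_
    filter_upwards [self_mem_nhdsWithin] with y hy
    rw [slope_def_field]
    exact div_nonneg (sub_nonneg.2 (hg (le_of_lt hy))) (sub_nonneg.2 (le_of_lt hy))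
  · simp [deriv_zero_of_not_differentiableAt hd]

lemma anti_deriv_nonpos2 {g : ℝ → ℝ} (hg : Antitone g) (x : ℝ) : deriv g x ≤ 0 := by
  by_cases hd : DifferentiableAt ℝ g x
  · have h := hd.hasDerivAt
    rw [hasDerivAt_iff_tendsto_slope] at h
    have h' : Tendsto (slope g x) (𝓝[>] x) (𝓝 (deriv g x)) :=
      h.mono_left (nhdsWithin_mono _ (fun y hy => ne_of_gt hy))
    refine le_of_tendsto h' ?_
    filter_upwards [self_mem_nhdsWithin] with y hy
    rw [slope_def_field]
    exact div_nonpos_of_nonpos_of_nonneg (sub_nonpos.2 (hg (le_of_lt hy)))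
      (sub_nonneg.2 (le_of_lt hy))
  · simp [deriv_zero_of_not_differentiableAt hd]

lemma cd2_deriv_diff' {φ : ℝ → ℝ} (hφ : ContDiff ℝ 2 φ) : Differentiable ℝ (deriv φ) := by
  have h : ContDiff ℝ (1+1 : WithTop ℕ∞) φ := by norm_num at hφ ⊢; exact hφ
  exact ((contDiff_succ_iff_deriv.mp h).2.2).differentiable one_ne_zero

lemma cd2_deriv2_cont' {φ : ℝ → ℝ} (hφ : ContDiff ℝ 2 φ) : Continuous (deriv (deriv φ)) := by
  have h : ContDiff ℝ (1+1 : WithTop ℕ∞) φ := by norm_num at hφ ⊢; exact hφ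
  exact ((contDiff_succ_iff_deriv.mp h).2.2).continuous_deriv le_rfl

lemma second_deriv_test' {φ : ℝ → ℝ} (hφ : ContDiff ℝ 2 φ) {x : ℝ} (h : IsLocalMin φ x) :
    0 ≤ deriv (deriv φ) x := by
  by_contra hneg
  push_neg at hneg
  have h1 : deriv φ x = 0 := h.deriv_eq_zero
  have hd2 : Differentiable ℝ (deriv φ) := cd2_deriv_diff' hφ
  have hD := (hd2 x).hasDerivAt
  rw [hasDerivAt_iff_tendsto_slope] at hD
  have hD' : Tendsto (slope (deriv φ) x) (𝓝[>] x) (𝓝 (deriv (deriv φ) x)) :=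
    hD.mono_left (nhdsWithin_mono _ (fun y hy => ne_of_gt hy))
  have hev : ∀ᶠ y in 𝓝[>] x, deriv φ y < 0 := by
    filter_upwards [hD'.eventually_lt_const hneg, self_mem_nhdsWithin] with y hy hy'
    rw [slope_def_field, h1, sub_zero] at hy
    have := mul_neg_of_neg_of_pos hy (sub_pos.2 (show x < y from hy'))
    rw [div_mul_cancel₀] at this
    · linarith
    · exact sub_ne_zero.2 (ne_of_gt hy')
  rw [eventually_nhdsWithin_iff] at hev
  obtain ⟨δ, hδpos, hδ⟩ := Metric.eventually_nhds_iff.mp (hev.and h)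
  have hmem : ∀ y ∈ Ioo x (x + δ/2), deriv φ y < 0 := by
    intro y hy
    have : dist y x < δ := by
      rw [Real.dist_eq, abs_of_pos (sub_pos.2 hy.1)]; linarith [hy.2]
    exact (hδ this).1 hy.1
  have hanti : StrictAntiOn φ (Icc x (x + δ/2)) := by
    refine strictAntiOn_of_deriv_neg (convex_Icc _ _) ((hφ.continuous).continuousOn) ?_
    intro y hy
    rw [interior_Icc] at hy
    exact hmem y hy
  have hlt : φ (x + δ/2) < φ x :=
    hanti (left_mem_Icc.2 (by linarith)) (right_mem_Icc.2 (by linarith)) (by linarith)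
  have hge : φ x ≤ φ (x + δ/2) := by
    refine (hδ (y := x + δ/2) ?_).2
    rw [Real.dist_eq, abs_of_pos (by linarith)]
    linarith
  linarith

/-- Mean value bound. -/
lemma mvt_bound' {g : ℝ → ℝ} (hg : ContDiff ℝ 2 g) {a b C : ℝ} (hab : a ≤ b)
    (hd : ∀ x ∈ Ioo a b, deriv g x ≤ C) : g b - g a ≤ C * (b - a) := by
  rcases eq_or_lt_of_le hab with h | h
  · subst h; simp
  · obtain ⟨ξ, hξ, heq⟩ := exists_hasDerivAt_eq_slope g (deriv g) h
      (hg.continuous.continuousOn)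
      (fun x _ => ((hg.differentiable two_ne_zero) x).hasDerivAt)
    have h2 : (g b - g a) / (b - a) ≤ C := heq ▸ hd ξ hξ
    have h3 : 0 < b - a := by linarith
    calc g b - g a = ((g b - g a)/(b-a)) * (b-a) := by field_simp
      _ ≤ C * (b-a) := mul_le_mul_of_nonneg_right h2 h3.le

/-- The comparison (maximum-principle) lemma for the delayed linearized operator. -/
lemma comp_lemma' (c b ε μ A R₀ : ℝ) (hε : 0 < ε) (hε1 : ε < 1) (hμ : 0 < μ) (hA : 0 < A)
    (W : ℝ → ℝ) (hWc : ContDiff ℝ 2 W) (hWtop : Tendsto W atTop (𝓝 0))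
    (hchar : μ^2 + |c| * μ + (1-ε) * Real.exp (μ * |b|) ≤ 1 - ε/2)
    (hbig : ∀ z ∈ Icc R₀ (R₀ + |b|), W z ≤ A * Real.exp (-μ * z))
    (hineq : ∀ z, R₀ + |b| ≤ z → W z - (1-ε) * W (z+b) ≤ deriv (deriv W) z + c * deriv W z) :
    ∀ z, R₀ ≤ z → W z ≤ A * Real.exp (-μ*z) := by
  set ψ : ℝ → ℝ := fun z => A * Real.exp (-μ * z) with hψdef
  have hψeq : ∀ z, ψ z = A * Real.exp (-μ * z) := fun z => by rw [hψdef]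
  have hψC : ContDiff ℝ 2 ψ := by
    rw [hψdef]
    have : ContDiff ℝ 2 (fun z : ℝ => -μ * z) := contDiff_const.mul contDiff_id
    exact contDiff_const.mul (Real.contDiff_exp.comp this)
  have hψD : ∀ z, HasDerivAt ψ (-μ * ψ z) z := by
    intro z
    have h1 : HasDerivAt (fun z : ℝ => -μ * z) (-μ) z := by
      simpa using (hasDerivAt_id z).const_mul (-μ)
    have h2 := (h1.exp).const_mul A
    rw [hψeq z, hψdef]
    rw [show -μ * (A * Real.exp (-μ * z)) = A * (Real.exp (-μ * z) * -μ) by ring]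
    exact h2
  have hψtop : Tendsto ψ atTop (𝓝 0) := by
    have h1 : Tendsto (fun z : ℝ => -μ * z) atTop atBot :=
      tendsto_id.const_mul_atTop_of_neg (by linarith)
    have h2 := (Real.tendsto_exp_atBot.comp h1).const_mul A
    rw [hψdef]
    simpa [Function.comp] using h2
  clear_value ψ
  clear hψdef
  have hψpos : ∀ z, 0 < ψ z := fun z => by rw [hψeq]; positivity
  have hψ'p : ∀ z, deriv ψ z = -μ * ψ z := fun z => (hψD z).deriv
  have hψ' : deriv ψ = fun z => -μ * ψ z := funext hψ'p
  have hψdiff : Differentiable ℝ ψ := fun z => (hψD z).differentiableAt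
  have hψ'diff : Differentiable ℝ (deriv ψ) := by
    rw [hψ']; exact hψdiff.const_mul (-μ)
  have hψ'' : ∀ z, deriv (deriv ψ) z = μ^2 * ψ z := by
    intro z
    rw [hψ']
    have := ((hψD z).const_mul (-μ)).deriv
    rw [this]; ring
  have hsup : ∀ z, deriv (deriv ψ) z + c * deriv ψ z ≤
      ψ z - (1-ε) * ψ (z+b) - (ε/2) * ψ z := by
    intro z
    rw [hψ'' z, hψ'p z]
    have h1 : ψ (z+b) ≤ ψ z * Real.exp (μ * |b|) := by
      have hh : Real.exp (-μ*(z+b)) ≤ Real.exp (-μ*z) * Real.exp (μ * |b|) := by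
        rw [← Real.exp_add, Real.exp_le_exp]
        nlinarith [neg_abs_le b, le_abs_self b]
      calc ψ (z+b) = A * Real.exp (-μ*(z+b)) := hψeq _
        _ ≤ A * (Real.exp (-μ*z) * Real.exp (μ * |b|)) :=
            mul_le_mul_of_nonneg_left hh hA.le
        _ = ψ z * Real.exp (μ * |b|) := by rw [hψeq z]; ring
    have h2 : c * (-μ * ψ z) ≤ |c| * μ * ψ z := by
      have : -(c*μ) ≤ |c| * μ := by nlinarith [neg_abs_le c, le_abs_self c, hμ.le]
      nlinarith [(hψpos z).le]
    have h3 : (1-ε) * ψ (z+b) ≤ (1-ε) * (ψ z * Real.exp (μ * |b|)) :=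
      mul_le_mul_of_nonneg_left h1 (by linarith)
    nlinarith [hψpos z, mul_le_mul_of_nonneg_left hchar (hψpos z).le]
  by_contra hcon
  push_neg at hcon
  obtain ⟨z₁, hz₁R, hz₁⟩ := hcon
  set φ : ℝ → ℝ := fun z => ψ z - W z with hφdef
  have hφeq : ∀ z, φ z = ψ z - W z := fun z => by rw [hφdef]
  have hφcont : Continuous φ := by
    rw [hφdef]; exact hψC.continuous.sub hWc.continuous
  have hφC2 : ContDiff ℝ 2 φ := by rw [hφdef]; exact hψC.sub hWc
  have hφtop : Tendsto φ atTop (𝓝 0) := by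
    rw [hφdef]; simpa using hψtop.sub hWtop
  have hφ' : deriv φ = fun z => deriv ψ z - deriv W z := by
    rw [hφdef]
    exact funext fun z => deriv_fun_sub (hψdiff z) ((hWc.differentiable two_ne_zero) z)
  clear_value φ
  clear hφdef
  have hWdiff2 : Differentiable ℝ (deriv W) := cd2_deriv_diff' hWc
  have hφz₁ : φ z₁ < 0 := by rw [hφeq, hψeq]; linarith
  have hev : ∀ᶠ z in atTop, φ z₁ / 2 < φ z :=
    hφtop.eventually_const_lt (by linarith)
  obtain ⟨T₀, hT₀⟩ := eventually_atTop.mp hev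
  set T := max T₀ z₁ with hT
  have hz₁T : z₁ ≤ T := le_max_right _ _
  have hR₀T : R₀ ≤ T := le_trans hz₁R hz₁T
  obtain ⟨z₀, hz₀mem, hz₀min⟩ :=
    isCompact_Icc.exists_isMinOn (s := Icc R₀ T) (nonempty_Icc.2 hR₀T) hφcont.continuousOn
  have hgmin : ∀ y, R₀ ≤ y → φ z₀ ≤ φ y := by
    intro y hy
    by_cases hyT : y ≤ T
    · exact hz₀min ⟨hy, hyT⟩
    · have h1 : φ z₀ ≤ φ z₁ := hz₀min ⟨hz₁R, hz₁T⟩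
      have h2 : φ z₁ / 2 < φ y := hT₀ y (le_trans (le_max_left _ _) (le_of_not_ge hyT))
      linarith
  have hφz₀ : φ z₀ < 0 := lt_of_le_of_lt (hz₀min ⟨hz₁R, hz₁T⟩) hφz₁
  have hz₀R : R₀ + |b| < z₀ := by
    by_contra hle
    push_neg at hle
    have h1 := hbig z₀ ⟨hz₀mem.1, hle⟩
    have h2 : φ z₀ = A * Real.exp (-μ * z₀) - W z₀ := by rw [hφeq, hψeq]
    linarith
  have hloc : IsLocalMin φ z₀ := by
    have hop : Ioi R₀ ∈ 𝓝 z₀ :=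
      isOpen_Ioi.mem_nhds (Set.mem_Ioi.mpr (by have := abs_nonneg b; linarith))
    filter_upwards [hop] with y hy
    exact hgmin y (le_of_lt hy)
  have hφ'' : deriv (deriv φ) z₀ = deriv (deriv ψ) z₀ - deriv (deriv W) z₀ := by
    rw [hφ']
    exact deriv_fun_sub (hψ'diff z₀) (hWdiff2 z₀)
  have hder0 : deriv φ z₀ = 0 := hloc.deriv_eq_zero
  have hder2 : 0 ≤ deriv (deriv φ) z₀ := second_deriv_test' hφC2 hloc
  have hkey : deriv (deriv φ) z₀ + c * deriv φ z₀ ≤ ε * φ z₀ := by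
    have e1 : deriv (deriv φ) z₀ + c * deriv φ z₀ =
        (deriv (deriv ψ) z₀ + c * deriv ψ z₀) - (deriv (deriv W) z₀ + c * deriv W z₀) := by
      rw [hφ'', hφ']; ring
    have e2 := hsup z₀
    have e3 := hineq z₀ hz₀R.le
    have e4 : φ z₀ ≤ φ (z₀ + b) := by
      refine hgmin (z₀ + b) ?_
      have := neg_abs_le b; linarith
    have e5 : (1-ε) * φ z₀ ≤ (1-ε) * φ (z₀ + b) :=
      mul_le_mul_of_nonneg_left e4 (by linarith)
    have e7 : φ z₀ = ψ z₀ - W z₀ := hφeq _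
    have e8 : φ (z₀ + b) = ψ (z₀ + b) - W (z₀ + b) := hφeq _
    nlinarith [hψpos z₀]
  have hc0 : c * deriv φ z₀ = 0 := by rw [hder0]; ring
  have hneg : ε * φ z₀ < 0 := mul_neg_of_pos_of_neg hε hφz₀
  linarith

end Helpers

/-- `f : [0,∞) → [0,∞)` is a monostable nonlinearity of class `C²`:
`f(0)=0`, `f(1)=1`, `f'(0)>1`, `f'(1)<1`, `f'>0` on `(0,1)` and `f(u)>u` on `(0,1)`. -/
structure Monostable (f : ℝ → ℝ) : Prop where
  smooth : ContDiffOn ℝ 2 f (Ici 0)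
  nonneg : ∀ u, 0 ≤ u → 0 ≤ f u
  map0 : f 0 = 0
  map1 : f 1 = 1
  slope0 : 1 < derivWithin f (Ici 0) 0
  slope1 : derivWithin f (Ici 0) 1 < 1
  derivPos : ∀ u ∈ Ioo (0:ℝ) 1, 0 < derivWithin f (Ici 0) u
  aboveId : ∀ u ∈ Ioo (0:ℝ) 1, u < f u

/-- `feta` is a bistable approximation of the monostable nonlinearity `f`:
a bounded increasing `C²` extension of `f|_{[0,1]}` with `feta(−η)=−η`, `feta'(−η)<1`,
`feta(u)<u` on `(−η,0)∪(1,∞)` and `feta(u)>u` on `(−∞,−η)∪(0,1)`. -/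
structure BistableApprox (f feta : ℝ → ℝ) (η : ℝ) : Prop where
  smooth : ContDiff ℝ 2 feta
  bounded : ∃ M, ∀ u, |feta u| ≤ M
  mono : StrictMono feta
  eqOn : ∀ u ∈ Icc (0:ℝ) 1, feta u = f u
  fixed : feta (-η) = -η
  slope : deriv feta (-η) < 1
  below : ∀ u, u ∈ Ioo (-η) 0 ∪ Ioi 1 → feta u < u
  above : ∀ u, u ∈ Iio (-η) ∪ Ioo 0 1 → u < feta u

/-- A nonincreasing bistable delayed travelling wave of speed `c` for the
nonlinearity `feta`: `U'' + cU' + feta(U(·+cτ)) − U = 0`, `U(−∞)=1`, `U(+∞)=−η`. -/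
def BistableWave (feta : ℝ → ℝ) (η τ : ℝ) (U : ℝ → ℝ) (c : ℝ) : Prop :=
  ContDiff ℝ 2 U ∧ Antitone U ∧
    (∀ z, deriv (deriv U) z + c * deriv U z + feta (U (z + c * τ)) - U z = 0) ∧
    Tendsto U atBot (𝓝 1) ∧ Tendsto U atTop (𝓝 (-η))

/-- A monostable delayed travelling wave of speed `c` for the nonlinearity `f`:
a `C²` profile with values in `[0,1]`, `U'' + cU' + f(U(·+cτ)) − U = 0`,
`U(−∞)=1`, `U(+∞)=0`. -/
def MonoWave (f : ℝ → ℝ) (τ : ℝ) (U : ℝ → ℝ) (c : ℝ) : Prop :=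
  ContDiff ℝ 2 U ∧ (∀ z, U z ∈ Icc (0:ℝ) 1) ∧
    (∀ z, deriv (deriv U) z + c * deriv U z + f (U (z + c * τ)) - U z = 0) ∧
    Tendsto U atBot (𝓝 1) ∧ Tendsto U atTop (𝓝 0)

set_option maxHeartbeats 3000000 in
/-- Exponential decay of a bistable delayed travelling wave profile towards its
limits, and exponential decay of its first and second derivatives. -/
theorem stmt_3 (τ η : ℝ) (hτ : 0 < τ) (hη : η ∈ Ioc (0:ℝ) 1)
    (f feta : ℝ → ℝ) (hf : Monostable f) (hfeta : BistableApprox f feta η)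
    (U : ℝ → ℝ) (c : ℝ) (hU : BistableWave feta η τ U c) :
    ∃ μ > (0:ℝ), ∃ M > (0:ℝ),
      (∀ z ≤ (0:ℝ), |1 - U z| + |(-η) - U (-z)| ≤ M * Real.exp (μ * z)) ∧
      (∀ z : ℝ, |deriv U z| + |deriv (deriv U) z| ≤ M * Real.exp (-μ * |z|)) := by
  obtain ⟨hUC2, hUanti, hUeq, hUbot, hUtop⟩ := hU
  obtain ⟨hη0, hη1⟩ := hη
  set b := c * τ with hb
  have hUdiff : Differentiable ℝ U := hUC2.differentiable two_ne_zero
  have hUcont : Continuous U := hUC2.continuous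
  -- range bounds
  have hUle1 : ∀ z, U z ≤ 1 := by
    intro z
    refine ge_of_tendsto hUbot ?_
    filter_upwards [eventually_le_atBot z] with w hw
    exact hUanti hw
  have hUgeη : ∀ z, -η ≤ U z := by
    intro z
    refine le_of_tendsto hUtop ?_
    filter_upwards [eventually_ge_atTop z] with w hw
    exact hUanti hw
  -- facts about deriv feta
  have hfC : Continuous (deriv feta) := hfeta.smooth.continuous_deriv one_le_two
  have hfd0 : ∀ u, 0 ≤ deriv feta u := mono_deriv_nonneg' hfeta.mono.monotone
  have hfeta1 : feta 1 = 1 := by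
    rw [hfeta.eqOn 1 (by norm_num), hf.map1]
  -- the slope of feta at 1 is < 1
  have hslope1 : deriv feta 1 < 1 := by
    have h1nhds : Ici (0:ℝ) ∈ 𝓝 (1:ℝ) := Ici_mem_nhds one_pos
    have hfdiff1 : DifferentiableAt ℝ f 1 :=
      ((hf.smooth 1 (mem_Ici.mpr zero_le_one)).contDiffAt h1nhds).differentiableAt two_ne_zero
    have e1 : derivWithin f (Ici 0) 1 = deriv f 1 := derivWithin_of_mem_nhds h1nhds
    have hu : UniqueDiffWithinAt ℝ (Iic (1:ℝ)) 1 := (uniqueDiffOn_Iic 1) 1 (mem_Iic.mpr le_rfl)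
    have e2 : derivWithin feta (Iic 1) 1 = deriv feta 1 :=
      ((hfeta.smooth.differentiable two_ne_zero) 1).derivWithin hu
    have e3 : derivWithin f (Iic 1) 1 = deriv f 1 := hfdiff1.derivWithin hu
    have e4 : derivWithin feta (Iic 1) 1 = derivWithin f (Iic 1) 1 := by
      refine Filter.EventuallyEq.derivWithin_eq ?_ (hfeta.eqOn 1 (by norm_num))
      refine Filter.eventuallyEq_of_mem (mem_nhdsWithin.mpr
        ⟨Ioi 0, isOpen_Ioi, mem_Ioi.mpr zero_lt_one, ?_⟩) (fun x hx => hfeta.eqOn x hx)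
      intro x hx
      exact ⟨le_of_lt hx.1, hx.2⟩
    calc deriv feta 1 = derivWithin feta (Iic 1) 1 := e2.symm
      _ = deriv f 1 := by rw [e4, e3]
      _ = derivWithin f (Ici 0) 1 := e1.symm
      _ < 1 := hf.slope1
  -- choose ε
  set d := max (deriv feta (-η)) (deriv feta 1) with hd
  have hd1 : d < 1 := max_lt hfeta.slope hslope1
  have hd0 : 0 ≤ d := le_trans (hfd0 (-η)) (le_max_left _ _)
  set ε := (1 - d)/2 with hεdef
  have hε : 0 < ε := by rw [hεdef]; linarith
  have hε1 : ε < 1 := by rw [hεdef]; linarith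
  have hdε : d < 1 - ε := by rw [hεdef]; linarith
  -- choose δ with the linearization estimates
  obtain ⟨δ, hδ0, hEst1, hEst2⟩ :
      ∃ δ > 0, (∀ u ∈ Icc (-η) (-η+δ), feta u + η ≤ (1-ε)*(u+η)) ∧
               (∀ u ∈ Icc (1-δ) 1, 1 - feta u ≤ (1-ε)*(1-u)) := by
    have hopen : IsOpen {u : ℝ | deriv feta u < 1 - ε} := isOpen_lt hfC continuous_const
    have hmem1 : -η ∈ {u : ℝ | deriv feta u < 1 - ε} :=
      lt_of_le_of_lt (le_max_left _ _) hdε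
    have hmem2 : (1:ℝ) ∈ {u : ℝ | deriv feta u < 1 - ε} :=
      lt_of_le_of_lt (le_max_right _ _) hdε
    obtain ⟨r₁, hr₁, hball1⟩ := Metric.isOpen_iff.mp hopen (-η) hmem1
    obtain ⟨r₂, hr₂, hball2⟩ := Metric.isOpen_iff.mp hopen 1 hmem2
    refine ⟨min r₁ r₂ / 2, by positivity, ?_, ?_⟩
    · intro u hu
      have hbd : ∀ x ∈ Ioo (-η) u, deriv feta x ≤ 1 - ε := by
        intro x hx
        have hxball : x ∈ Metric.ball (-η) r₁ := by
          rw [Metric.mem_ball, Real.dist_eq, abs_of_nonneg (by linarith [hx.1])]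
          have := hu.2
          have hm : min r₁ r₂ ≤ r₁ := min_le_left _ _
          linarith [hx.2]
        exact (hball1 hxball).le
      have h := mvt_bound' hfeta.smooth hu.1 hbd
      rw [hfeta.fixed] at h
      have he : u - (-η) = u + η := by ring
      rw [he] at h
      linarith
    · intro u hu
      have hbd : ∀ x ∈ Ioo u 1, deriv feta x ≤ 1 - ε := by
        intro x hx
        have hxball : x ∈ Metric.ball (1:ℝ) r₂ := by
          rw [Metric.mem_ball, Real.dist_eq, abs_of_nonpos (by linarith [hx.2])]
          have := hu.1
          have hm : min r₁ r₂ ≤ r₂ := min_le_right _ _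
          linarith [hx.1]
        exact (hball2 hxball).le
      have h := mvt_bound' hfeta.smooth hu.2 hbd
      rw [hfeta1] at h
      linarith
  -- choose μ
  obtain ⟨μ, hμ, hchar⟩ :
      ∃ μ > (0:ℝ), μ^2 + |c| * μ + (1-ε) * Real.exp (μ * |b|) ≤ 1 - ε/2 := by
    set F : ℝ → ℝ := fun μ => μ^2 + |c| * μ + (1-ε) * Real.exp (μ * |b|) with hF
    have hcont : ContinuousAt F 0 := by
      have : Continuous F := by
        rw [hF]; fun_prop
      exact this.continuousAt
    have h0 : F 0 = 1 - ε := by rw [hF]; norm_num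
    have hev : ∀ᶠ μ in 𝓝 (0:ℝ), F μ < 1 - ε/2 := by
      refine hcont.eventually_lt_const ?_
      rw [h0]; linarith
    have hev2 : ∀ᶠ μ in 𝓝[>] (0:ℝ), F μ < 1 - ε/2 := hev.filter_mono nhdsWithin_le_nhds
    obtain ⟨μ, hμ1, hμ2⟩ := (hev2.and self_mem_nhdsWithin).exists
    exact ⟨μ, hμ2, hμ1.le⟩
  -- choose R₀
  obtain ⟨R₀, hR₀p, hR₀m⟩ :
      ∃ R₀ : ℝ, (∀ s, R₀ ≤ s → U s ≤ -η + δ) ∧ (∀ s, s ≤ -R₀ → 1 - δ ≤ U s) := by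
    have h1 : ∀ᶠ s in atTop, U s < -η + δ := hUtop.eventually_lt_const (by linarith)
    obtain ⟨R₁, hR₁⟩ := eventually_atTop.mp h1
    have h2 : ∀ᶠ s in atBot, 1 - δ < U s := hUbot.eventually_const_lt (by linarith)
    obtain ⟨R₂, hR₂⟩ := eventually_atBot.mp h2
    refine ⟨max R₁ (-R₂), fun s hs => (hR₁ s (le_trans (le_max_left _ _) hs)).le,
            fun s hs => (hR₂ s ?_).le⟩
    have : -max R₁ (-R₂) ≤ R₂ := by
      have := le_max_right R₁ (-R₂); linarith
    linarith
  -- the amplitude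
  set A := (1+η) * Real.exp (μ * (R₀ + |b|)) with hAdef
  have hA : 0 < A := by rw [hAdef]; positivity
  have hAbove : ∀ z, z ≤ R₀ + |b| → (1+η : ℝ) ≤ A * Real.exp (-μ*z) := by
    intro z hz
    rw [hAdef, mul_assoc, ← Real.exp_add]
    have h1 : (1:ℝ) ≤ Real.exp (μ * (R₀ + |b|) + -μ*z) := by
      rw [← Real.exp_zero]
      apply Real.exp_le_exp.mpr
      nlinarith
    nlinarith
  -- the equation, rearranged
  have heqn : ∀ z, deriv (deriv U) z + c * deriv U z = U z - feta (U (z + b)) := by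
    intro z
    have := hUeq z
    linarith
  -- decay at +∞
  have hPlus : ∀ z, U z + η ≤ A * Real.exp (-μ * z) := by
    have hWc : ContDiff ℝ 2 (fun z => U z + η) := hUC2.add contDiff_const
    have hWtop : Tendsto (fun z => U z + η) atTop (𝓝 0) := by
      have := hUtop.add_const η
      simpa using this
    have hWd1 : deriv (fun z => U z + η) = deriv U := by
      funext z
      exact deriv_add_const η
    have hbig : ∀ z ∈ Icc R₀ (R₀ + |b|), U z + η ≤ A * Real.exp (-μ * z) := by
      intro z hz
      have := hAbove z hz.2
      linarith [hUle1 z]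
    have hineq : ∀ z, R₀ + |b| ≤ z →
        (U z + η) - (1-ε) * (U (z+b) + η) ≤
          deriv (deriv (fun z => U z + η)) z + c * deriv (fun z => U z + η) z := by
      intro z hz
      rw [hWd1, heqn z]
      have hmem : U (z+b) ∈ Icc (-η) (-η+δ) := by
        constructor
        · exact hUgeη _
        · have : R₀ ≤ z + b := by
            have := neg_abs_le b
            linarith
          have := hR₀p (z+b) this
          linarith
      have := hEst1 (U (z+b)) hmem
      linarith
    have hres := comp_lemma' c b ε μ A R₀ hε hε1 hμ hA _ hWc hWtop hchar hbig hineq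
    intro z
    by_cases hz : R₀ ≤ z
    · exact hres z hz
    · push_neg at hz
      have h1 := hAbove z (by have := abs_nonneg b; linarith)
      linarith [hUle1 z]
  -- decay at −∞
  have hMinus : ∀ y, 1 - U y ≤ A * Real.exp (μ * y) := by
    have hWc : ContDiff ℝ 2 (fun z : ℝ => 1 - U (-z)) :=
      contDiff_const.sub (hUC2.comp (contDiff_id.neg))
    have hWtop : Tendsto (fun z : ℝ => 1 - U (-z)) atTop (𝓝 0) := by
      have h1 : Tendsto (fun z : ℝ => U (-z)) atTop (𝓝 1) :=
        hUbot.comp tendsto_neg_atTop_atBot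
      have := tendsto_const_nhds (x := (1:ℝ)) (f := atTop).sub h1
      simpa using this
    have hWd1 : deriv (fun z : ℝ => 1 - U (-z)) = fun z => deriv U (-z) := by
      funext z
      rw [deriv_const_sub, deriv_comp_neg, neg_neg]
    have hWd2 : deriv (fun z : ℝ => deriv U (-z)) = fun z => -deriv (deriv U) (-z) := by
      funext z
      exact deriv_comp_neg (f := deriv U) (x := z)
    have hchar' : μ^2 + |(-c)| * μ + (1-ε) * Real.exp (μ * |(-b)|) ≤ 1 - ε/2 := by
      rw [abs_neg, abs_neg]; exact hchar
    have hbig : ∀ z ∈ Icc R₀ (R₀ + |(-b)|), 1 - U (-z) ≤ A * Real.exp (-μ * z) := by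
      intro z hz
      rw [abs_neg] at hz
      have := hAbove z hz.2
      linarith [hUgeη (-z)]
    have hineq : ∀ z, R₀ + |(-b)| ≤ z →
        (1 - U (-z)) - (1-ε) * (1 - U (-(z + -b))) ≤
          deriv (deriv (fun z : ℝ => 1 - U (-z))) z + (-c) * deriv (fun z : ℝ => 1 - U (-z)) z := by
      intro z hz
      rw [abs_neg] at hz
      simp only [hWd1, hWd2]
      have heqz := heqn (-z)
      have harg : -z + b = -(z + -b) := by ring
      rw [harg] at heqz
      have hmem : U (-(z + -b)) ∈ Icc (1-δ) 1 := by
        constructor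
        · have h1 : -(z + -b) ≤ -R₀ := by
            have := neg_abs_le b
            have := le_abs_self b
            linarith
          exact hR₀m _ h1
        · exact hUle1 _
      have hest := hEst2 (U (-(z + -b))) hmem
      have : -deriv (deriv U) (-z) + -c * deriv U (-z) = feta (U (-(z + -b))) - U (-z) := by
        linarith
      rw [this]
      linarith
    have hres := comp_lemma' (-c) (-b) ε μ A R₀ hε hε1 hμ hA _ hWc hWtop hchar' hbig hineq
    intro y
    have hexp : -μ * (-y) = μ * y := by ring
    by_cases hy : R₀ ≤ -y
    · have := hres (-y) hy
      rw [neg_neg, hexp] at this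
      exact this
    · push_neg at hy
      have h1 := hAbove (-y) (by have := abs_nonneg b; linarith)
      rw [hexp] at h1
      linarith [hUgeη y]
  -- global Lipschitz-type bounds for feta on [-η, 1]
  obtain ⟨K, hK0, hLip1, hLip2⟩ :
      ∃ K, 0 ≤ K ∧ (∀ u ∈ Icc (-η) 1, feta u + η ≤ K * (u + η)) ∧
        (∀ u ∈ Icc (-η) 1, 1 - feta u ≤ K * (1 - u)) := by
    have hne : (Icc (-η) (1:ℝ)).Nonempty := ⟨-η, le_refl _, by linarith⟩
    obtain ⟨u₀, hu₀mem, hu₀max⟩ := isCompact_Icc.exists_isMaxOn hne hfC.continuousOn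
    have hmax := isMaxOn_iff.mp hu₀max
    refine ⟨deriv feta u₀, hfd0 u₀, ?_, ?_⟩
    · intro u hu
      have h := mvt_bound' hfeta.smooth hu.1
        (fun x hx => hmax x ⟨hx.1.le, le_trans hx.2.le hu.2⟩)
      rw [hfeta.fixed] at h
      have he : u - (-η) = u + η := by ring
      rw [he] at h
      linarith
    · intro u hu
      have h := mvt_bound' hfeta.smooth hu.2
        (fun x hx => hmax x ⟨le_trans hu.1 hx.1.le, hx.2.le⟩)
      rw [hfeta1] at h
      linarith
  have hexp1 : (1:ℝ) ≤ Real.exp μ := Real.one_le_exp hμ.le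
  have hexpb : (1:ℝ) ≤ Real.exp (μ * |b|) := Real.one_le_exp (by positivity)
  set Cg := (1+K) * A * Real.exp (μ * |b|) with hCgdef
  have hCg0 : 0 < Cg := by rw [hCgdef]; positivity
  have hfetage : ∀ z, -η ≤ feta (U z) := fun z => by
    have h := hfeta.mono.monotone (hUgeη z)
    rw [hfeta.fixed] at h; exact h
  have hfetale : ∀ z, feta (U z) ≤ 1 := fun z => by
    have h := hfeta.mono.monotone (hUle1 z)
    rw [hfeta1] at h; exact h
  -- decay of the inhomogeneity
  have hg : ∀ z, |U z - feta (U (z + b))| ≤ Cg * Real.exp (-μ * |z|) := by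
    intro z
    rcases le_or_gt 0 z with hz | hz
    · rw [abs_of_nonneg hz]
      have h1 := hPlus z
      have h2 : feta (U (z+b)) + η ≤ K * (U (z+b) + η) := hLip1 _ ⟨hUgeη _, hUle1 _⟩
      have h3 := hPlus (z+b)
      have h4 : Real.exp (-μ * (z+b)) ≤ Real.exp (μ * |b|) * Real.exp (-μ * z) := by
        rw [← Real.exp_add, Real.exp_le_exp]
        nlinarith [le_abs_self b, neg_abs_le b]
      have h5 : K * (U (z+b) + η) ≤ K * (A * Real.exp (-μ * (z+b))) :=
        mul_le_mul_of_nonneg_left h3 hK0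
      have h6 := mul_le_mul_of_nonneg_left h4 (mul_nonneg hK0 hA.le)
      have habs : |U z - feta (U (z + b))| ≤ (U z + η) + (feta (U (z+b)) + η) := by
        rw [abs_le]
        constructor
        · linarith [hUgeη z, hfetale (z+b)]
        · linarith [hUle1 z, hfetage (z+b)]
      have h7 : 0 ≤ A * Real.exp (-μ*z) * (Real.exp (μ * |b|) - 1) :=
        mul_nonneg (mul_nonneg hA.le (Real.exp_pos _).le) (by linarith)
      rw [hCgdef]
      linarith [h1, h2, h5, h6, habs, h7]
    · rw [abs_of_neg hz]
      have he : -μ * -z = μ * z := by ring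
      rw [he]
      have h1 := hMinus z
      have h2 : 1 - feta (U (z+b)) ≤ K * (1 - U (z+b)) := hLip2 _ ⟨hUgeη _, hUle1 _⟩
      have h3 := hMinus (z+b)
      have h4 : Real.exp (μ * (z+b)) ≤ Real.exp (μ * |b|) * Real.exp (μ * z) := by
        rw [← Real.exp_add, Real.exp_le_exp]
        nlinarith [le_abs_self b, neg_abs_le b]
      have h5 : K * (1 - U (z+b)) ≤ K * (A * Real.exp (μ * (z+b))) :=
        mul_le_mul_of_nonneg_left h3 hK0
      have h6 := mul_le_mul_of_nonneg_left h4 (mul_nonneg hK0 hA.le)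
      have habs : |U z - feta (U (z + b))| ≤ (1 - U z) + (1 - feta (U (z+b))) := by
        rw [abs_le]
        constructor
        · linarith [hUle1 z, hfetale (z+b)]
        · linarith [hUle1 z, hfetale (z+b), hUgeη z, hfetage (z+b)]
      have h7 : 0 ≤ A * Real.exp (μ*z) * (Real.exp (μ * |b|) - 1) :=
        mul_nonneg (mul_nonneg hA.le (Real.exp_pos _).le) (by linarith)
      rw [hCgdef]
      linarith [h1, h2, h5, h6, habs, h7]
  -- one-step decrement bound
  set C1v := (1+η+A) * Real.exp μ with hC1def
  have hC10 : 0 < C1v := by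
    rw [hC1def]
    have : (0:ℝ) < 1+η+A := by linarith
    positivity
  have hdiffb : ∀ z, U (z - 1) - U z ≤ C1v * Real.exp (-μ * |z|) := by
    intro z
    rcases le_or_gt 1 z with hz | hz
    · rw [abs_of_nonneg (by linarith)]
      have h1 := hPlus (z-1)
      have h2 : Real.exp (-μ*(z-1)) = Real.exp μ * Real.exp (-μ*z) := by
        rw [← Real.exp_add]; ring_nf
      have h1' : U (z-1) + η ≤ A * (Real.exp μ * Real.exp (-μ*z)) := by
        rw [← h2]; exact h1
      have h3 := hUgeη z
      have h7 : 0 ≤ (1+η) * Real.exp μ * Real.exp (-μ*z) :=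
        mul_nonneg (mul_nonneg (by linarith) (Real.exp_pos _).le) (Real.exp_pos _).le
      rw [hC1def]
      linarith [h1', h3, h7]
    · rcases le_or_gt z 0 with hz2 | hz2
      · rw [abs_of_nonpos hz2]
        have he : -μ * -z = μ * z := by ring
        rw [he]
        have h1 := hMinus z
        have h2 := hUle1 (z-1)
        have h7 : 0 ≤ (1+η) * Real.exp μ * Real.exp (μ*z) :=
          mul_nonneg (mul_nonneg (by linarith) (Real.exp_pos _).le) (Real.exp_pos _).le
        have h8 : 0 ≤ A * (Real.exp μ - 1) * Real.exp (μ*z) :=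
          mul_nonneg (mul_nonneg hA.le (by linarith)) (Real.exp_pos _).le
        rw [hC1def]
        linarith [h1, h2, h7, h8]
      · rw [abs_of_nonneg hz2.le]
        have h4 : (1:ℝ) ≤ Real.exp μ * Real.exp (-μ*z) := by
          rw [← Real.exp_add, ← Real.exp_zero, Real.exp_le_exp]
          nlinarith
        have h5 := mul_le_mul_of_nonneg_left h4 (show (0:ℝ) ≤ 1+η+A by linarith)
        have h2 := hUle1 (z-1)
        have h3 := hUgeη z
        rw [hC1def]
        linarith [h5, h2, h3]
  -- derivative bounds
  have hddU_cont : Continuous (deriv (deriv U)) := cd2_deriv2_cont' hUC2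
  have hdU_cont : Continuous (deriv U) :=
    (cd2_deriv_diff' hUC2).continuous
  have hdU_nonpos : ∀ z, deriv U z ≤ 0 := anti_deriv_nonpos2 hUanti
  have hGcont : Continuous (fun s => U s - feta (U (s + b))) :=
    hUcont.sub (hfeta.smooth.continuous.comp (hUcont.comp (continuous_id.add continuous_const)))
  have heq2 : ∀ s, deriv (deriv U) s = (U s - feta (U (s+b))) - c * deriv U s := by
    intro s; have := hUeq s; linarith
  set C2v := (1+|c|) * C1v + Cg * Real.exp μ with hC2def
  have hC20 : 0 < C2v := by
    rw [hC2def]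
    have h1 : 0 ≤ |c| := abs_nonneg c
    have h2 : 0 ≤ |c| * C1v := mul_nonneg h1 hC10.le
    have h3 : 0 < Cg * Real.exp μ := mul_pos hCg0 (Real.exp_pos μ)
    nlinarith [hC10]
  have hU' : ∀ z, |deriv U z| ≤ C2v * Real.exp (-μ * |z|) := by
    intro z
    obtain ⟨ξ, hξ, hslope⟩ := exists_hasDerivAt_eq_slope U (deriv U) (show z-1 < z by linarith)
      (hUcont.continuousOn) (fun x _ => (hUdiff x).hasDerivAt)
    have h0 : z - (z-1) = 1 := by ring
    rw [h0, div_one] at hslope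
    have hint1 : ∫ s in ξ..z, deriv (deriv U) s = deriv U z - deriv U ξ :=
      intervalIntegral.integral_deriv_eq_sub (fun x _ => cd2_deriv_diff' hUC2 x)
        (hddU_cont.continuousOn.intervalIntegrable)
    have hint2 : ∫ s in ξ..z, deriv U s = U z - U ξ :=
      intervalIntegral.integral_deriv_eq_sub (fun x _ => hUdiff x)
        (hdU_cont.continuousOn.intervalIntegrable)
    have hint1' : ∫ s in ξ..z, ((U s - feta (U (s+b))) - c * deriv U s)
        = deriv U z - deriv U ξ := by
      rw [← hint1]
      apply intervalIntegral.integral_congr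
      intro s _
      rw [heq2 s]
    have hsplit : ∫ s in ξ..z, ((U s - feta (U (s+b))) - c * deriv U s)
        = (∫ s in ξ..z, (U s - feta (U (s+b)))) - c * (U z - U ξ) := by
      rw [intervalIntegral.integral_sub (hGcont.continuousOn.intervalIntegrable)
        (((show Continuous (fun s => c * deriv U s) from continuous_const.mul hdU_cont)).continuousOn.intervalIntegrable),
        intervalIntegral.integral_const_mul, hint2]
    have hkey : deriv U z = deriv U ξ + (∫ s in ξ..z, (U s - feta (U (s+b)))) - c * (U z - U ξ) := by
      rw [hsplit] at hint1'
      linarith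
    have hbξ : |deriv U ξ| ≤ C1v * Real.exp (-μ * |z|) := by
      have h := hdiffb z
      rw [abs_of_nonpos (hdU_nonpos ξ), hslope]
      linarith
    have hexps : ∀ x, x ∈ Set.uIoc ξ z → Real.exp (-μ * |x|) ≤ Real.exp μ * Real.exp (-μ*|z|) := by
      intro x hx
      rw [Set.uIoc_of_le hξ.2.le] at hx
      have hx1 : z - 1 ≤ x := by linarith [hξ.1, hx.1]
      have hx2 : x ≤ z := hx.2
      rw [← Real.exp_add, Real.exp_le_exp]
      have habs2 : |z| - |x| ≤ |z - x| := abs_sub_abs_le_abs_sub z x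
      have habs3 : |z - x| ≤ 1 := by
        rw [abs_le]; constructor <;> linarith
      nlinarith
    have hintb : |∫ s in ξ..z, (U s - feta (U (s+b)))|
        ≤ Cg * Real.exp μ * Real.exp (-μ*|z|) := by
      have h := intervalIntegral.norm_integral_le_of_norm_le_const
        (C := Cg * Real.exp μ * Real.exp (-μ*|z|)) (f := fun s => U s - feta (U (s+b)))
        (a := ξ) (b := z) ?_
      · rw [Real.norm_eq_abs] at h
        have hz1 : |z - ξ| ≤ 1 := by
          rw [abs_le]; constructor <;> [linarith [hξ.2]; linarith [hξ.1]]
        calc |∫ s in ξ..z, (U s - feta (U (s+b)))|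
            ≤ Cg * Real.exp μ * Real.exp (-μ*|z|) * |z - ξ| := h
          _ ≤ Cg * Real.exp μ * Real.exp (-μ*|z|) * 1 := by
              apply mul_le_mul_of_nonneg_left hz1
              positivity
          _ = Cg * Real.exp μ * Real.exp (-μ*|z|) := by ring
      · intro x hx
        rw [Real.norm_eq_abs]
        have h1 := hg x
        have h2 := hexps x hx
        have h3 := mul_le_mul_of_nonneg_left h2 hCg0.le
        calc |U x - feta (U (x+b))| ≤ Cg * Real.exp (-μ * |x|) := h1
          _ ≤ Cg * (Real.exp μ * Real.exp (-μ*|z|)) := h3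
          _ = Cg * Real.exp μ * Real.exp (-μ*|z|) := by ring
    have hUzξ : |U z - U ξ| ≤ C1v * Real.exp (-μ * |z|) := by
      have h1 : U z ≤ U ξ := hUanti hξ.2.le
      have h2 : U ξ ≤ U (z-1) := hUanti hξ.1.le
      rw [abs_of_nonpos (by linarith)]
      have := hdiffb z
      linarith
    have htri : |deriv U z| ≤ |deriv U ξ| + |∫ s in ξ..z, (U s - feta (U (s+b)))|
        + |c| * |U z - U ξ| := by
      rw [hkey]
      have t1 := abs_add_le (deriv U ξ) (∫ s in ξ..z, (U s - feta (U (s+b))))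
      have t2 := abs_sub (deriv U ξ + (∫ s in ξ..z, (U s - feta (U (s+b)))))
        (c * (U z - U ξ))
      rw [abs_mul] at t2
      linarith
    have hcmul := mul_le_mul_of_nonneg_left hUzξ (abs_nonneg c)
    rw [hC2def]
    linarith [hbξ, hintb, htri, hcmul]
  set C3v := Cg + |c| * C2v with hC3def
  have hC30 : 0 < C3v := by
    rw [hC3def]
    have h2 : 0 ≤ |c| * C2v := mul_nonneg (abs_nonneg c) hC20.le
    linarith [hCg0]
  have hU'' : ∀ z, |deriv (deriv U) z| ≤ C3v * Real.exp (-μ * |z|) := by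
    intro z
    rw [heq2 z]
    have h1 := hg z
    have h2 := hU' z
    have h3 := mul_le_mul_of_nonneg_left h2 (abs_nonneg c)
    have htri : |(U z - feta (U (z+b))) - c * deriv U z|
        ≤ |U z - feta (U (z+b))| + |c| * |deriv U z| := by
      have t := abs_sub (U z - feta (U (z+b))) (c * deriv U z)
      rw [abs_mul] at t
      exact t
    rw [hC3def]
    linarith [htri, h1, h3]
  -- conclusion
  refine ⟨μ, hμ, 2*A + C2v + C3v + 1, by linarith [hA, hC20, hC30], ?_, ?_⟩
  · intro z hz
    have h1 := hMinus z
    have h2 := hPlus (-z)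
    have he : -μ * -z = μ * z := by ring
    rw [he] at h2
    have e1 : |1 - U z| = 1 - U z := abs_of_nonneg (by linarith [hUle1 z])
    have e2 : |(-η) - U (-z)| = U (-z) + η := by
      rw [show (-η) - U (-z) = -(U (-z) + η) from by ring, abs_neg]
      exact abs_of_nonneg (by linarith [hUgeη (-z)])
    rw [e1, e2]
    have h7 : 0 ≤ (C2v + C3v + 1) * Real.exp (μ * z) := by positivity
    linarith [h1, h2, h7]
  · intro z
    have h1 := hU' z
    have h2 := hU'' z
    have h7 : 0 ≤ (2*A + 1) * Real.exp (-μ * |z|) := by positivity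
    linarith [h1, h2, h7, abs_nonneg (deriv U z), abs_nonneg (deriv (deriv U) z)]
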